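/- arXiv:2410.15310 — 5 statements merged into one kernel-verified Lean document; each statement's English description precedes it below -/
import Mathlib

section
/- For any λ > 0 and fully factorized likelihood p(Y|X,θ) = ∏_{(y,x)∈D} p(y|x,θ), the tempered posterior p_λ(θ|X,Y) ∝ p(Y|X,θ)^λ p(θ) equals a standard Bayesian posterior with new prior q(θ|X,λ) ∝ p(θ) ∏_{x∈X} ∫ p(y|x,θ)^λ dy and new per-example likelihood q(y|x,θ,λ) = p(y|x,θ)^λ / ∫ p(y'|x,θ)^λ dy'; that is, p_λ(θ|X,Y) ∝ q(θ|X,λ) ∏_{(y,x)∈D} q(y|x,θ,λ). -/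
open MeasureTheory Real

/-- For any `λ > 0` and fully factorized likelihood `p(Y|X,θ) = ∏_{(y,x)∈D} p(y|x,θ)`,
the (unnormalized) tempered posterior `p(Y|X,θ)^λ p(θ)` equals, up to a `θ`-independent
constant (here: exactly, in unnormalized form), the product of the new prior
`q(θ|X,λ) ∝ p(θ) ∏_{x∈X} ∫ p(y|x,θ)^λ dy` and the new per-example likelihoods
`q(y|x,θ,λ) = p(y|x,θ)^λ / ∫ p(y'|x,θ)^λ dy'`. -/
theorem tempered_posterior_is_bayes_posterior
    {Θ X Y : Type*} [MeasurableSpace Y] (μY : Measure Y)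
    (n : ℕ) (x : Fin n → X) (y : Fin n → Y)
    (p : Y → X → Θ → ℝ) (hp : ∀ y' x' θ, 0 < p y' x' θ)
    (lam : ℝ) (hlam : 0 < lam)
    (c : X → Θ → ℝ) (hc : ∀ x' θ, c x' θ = ∫ y', p y' x' θ ^ lam ∂μY)
    (hcpos : ∀ x' θ, 0 < c x' θ) (hcfin : ∀ x' θ, Integrable (fun y' => p y' x' θ ^ lam) μY)
    (prior : Θ → ℝ)
    (qprior : Θ → ℝ) (hqprior : ∀ θ, qprior θ = prior θ * ∏ i, c (x i) θ)
    (qlik : Y → X → Θ → ℝ)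
    (hqlik : ∀ y' x' θ, qlik y' x' θ = p y' x' θ ^ lam / c x' θ) :
    ∀ θ, (∏ i, p (y i) (x i) θ) ^ lam * prior θ
      = qprior θ * ∏ i, qlik (y i) (x i) θ := by
  intro θ
  have h1 : (∏ i, p (y i) (x i) θ) ^ lam = ∏ i, p (y i) (x i) θ ^ lam :=
    (Real.finset_prod_rpow _ _ (fun i _ => (hp _ _ _).le) lam).symm
  simp only [hqprior, hqlik, h1]
  rw [mul_assoc, ← Finset.prod_mul_distrib, mul_comm]
  congr 1
  refine Finset.prod_congr rfl fun i _ => ?_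
  rw [mul_div_cancel₀ _ (hcpos (x i) θ).ne']
end

section
/- For a Bernoulli distribution with parameter θ ∈ (0,1) and the tempered parameter θ*(λ) = θ^λ / (θ^λ + (1-θ)^λ), the Shannon entropy H(θ*(λ)) = -θ*(λ)ln θ*(λ) - (1-θ*(λ))ln(1-θ*(λ)) is monotonically non-increasing in λ > 0. -/
open Real

lemma tempered_form (θ : ℝ) (hθ0 : 0 < θ) (hθ1 : θ < 1) (lam : ℝ) :
    θ ^ lam / (θ ^ lam + (1 - θ) ^ lam)
      = 1 / (1 + Real.exp (lam * (Real.log (1 - θ) - Real.log θ))) := by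
  have h1 : (0:ℝ) < 1 - θ := by linarith
  rw [Real.rpow_def_of_pos hθ0, Real.rpow_def_of_pos h1]
  rw [mul_sub, Real.exp_sub]
  have he : Real.exp (Real.log θ * lam) > 0 := Real.exp_pos _
  field_simp

/-- For a Bernoulli distribution with parameter `θ ∈ (0,1)` and tempered parameter
`θ*(λ) = θ^λ / (θ^λ + (1-θ)^λ)`, the binary Shannon entropy
`H(θ*(λ)) = -θ*(λ) ln θ*(λ) - (1-θ*(λ)) ln (1-θ*(λ))` is monotonically
non-increasing in `λ > 0`. -/
theorem tempered_bernoulli_entropy_antitone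
    (θ : ℝ) (hθ : θ ∈ Set.Ioo (0 : ℝ) 1)
    (θstar : ℝ → ℝ) (hθstar : ∀ lam, θstar lam = θ ^ lam / (θ ^ lam + (1 - θ) ^ lam))
    (H : ℝ → ℝ) (hH : ∀ p, H p = -(p * Real.log p) - (1 - p) * Real.log (1 - p)) :
    AntitoneOn (fun lam => H (θstar lam)) (Set.Ioi (0 : ℝ)) := by
  obtain ⟨hθ0, hθ1⟩ := hθ
  have h1θ : (0:ℝ) < 1 - θ := by linarith
  set c : ℝ := Real.log (1 - θ) - Real.log θ with hc
  have hform : ∀ lam, θstar lam = 1 / (1 + Real.exp (lam * c)) := fun lam => by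
    rw [hθstar lam, tempered_form θ hθ0 hθ1]
  have hHbin : ∀ p, H p = Real.binEntropy p := fun p => by
    rw [hH p, Real.binEntropy, Real.log_inv, Real.log_inv]; ring
  intro a ha b hb hab
  simp only [Set.mem_Ioi] at ha hb
  simp only
  rw [hHbin, hHbin, hform, hform]
  -- basic bounds
  have hea : (0:ℝ) < Real.exp (a * c) := Real.exp_pos _
  have heb : (0:ℝ) < Real.exp (b * c) := Real.exp_pos _
  rcases le_or_gt θ 2⁻¹ with hhalf | hhalf
  · -- θ ≤ 1/2 : c ≥ 0, θ* ∈ [0, 1/2], θ* antitone, binEntropy mono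
    have hcpos : 0 ≤ c := by
      have : Real.log θ ≤ Real.log (1 - θ) :=
        Real.log_le_log hθ0 (by linarith)
      linarith
    have hmem : ∀ l : ℝ, 0 < l → 1 / (1 + Real.exp (l * c)) ∈ Set.Icc (0:ℝ) 2⁻¹ := by
      intro l hl
      have h1 : (1:ℝ) ≤ Real.exp (l * c) := by
        rw [← Real.exp_zero]; exact Real.exp_le_exp.mpr (by positivity)
      constructor
      · positivity
      · rw [div_le_iff₀ (by linarith)]; linarith
    have hle : 1 / (1 + Real.exp (b * c)) ≤ 1 / (1 + Real.exp (a * c)) := by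
      apply one_div_le_one_div_of_le (by linarith)
      have : Real.exp (a * c) ≤ Real.exp (b * c) :=
        Real.exp_le_exp.mpr (by nlinarith)
      linarith
    exact Real.binEntropy_strictMonoOn.monotoneOn (hmem b hb) (hmem a ha) hle
  · -- θ > 1/2 : c < 0, θ* ∈ [1/2, 1], θ* monotone, binEntropy anti
    have hcneg : c ≤ 0 := by
      have : Real.log (1 - θ) ≤ Real.log θ :=
        Real.log_le_log h1θ (by linarith)
      linarith
    have hmem : ∀ l : ℝ, 0 < l → 1 / (1 + Real.exp (l * c)) ∈ Set.Icc (2⁻¹:ℝ) 1 := by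
      intro l hl
      have hel : (0:ℝ) < Real.exp (l * c) := Real.exp_pos _
      have h1 : Real.exp (l * c) ≤ 1 := by
        rw [← Real.exp_zero]
        exact Real.exp_le_exp.mpr (by nlinarith)
      constructor
      · rw [le_div_iff₀ (by linarith)]; linarith
      · rw [div_le_one (by linarith)]; linarith
    have hle : 1 / (1 + Real.exp (a * c)) ≤ 1 / (1 + Real.exp (b * c)) := by
      apply one_div_le_one_div_of_le (by linarith)
      have : Real.exp (b * c) ≤ Real.exp (a * c) :=
        Real.exp_le_exp.mpr (by nlinarith)
      linarith
    exact Real.binEntropy_strictAntiOn.antitoneOn (hmem a ha) (hmem b hb) hle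
end

section
/- A necessary condition for the cold posterior effect (i.e., d/dλ B(p_λ)|_{λ=1} < 0) is that the Bayesian posterior does not achieve the minimal empirical loss: Ĝ(p_{λ=1}, D) > min_θ (-ln p(D|θ)). -/
open MeasureTheory Real

/-- A necessary condition for the cold posterior effect (`d/dλ B(p_λ)|_{λ=1} < 0`) is that
the Bayesian posterior does not achieve the minimal empirical loss:
`Ĝ(p_{λ=1}, D) > min_θ (-ln p(D|θ))`. The derivative identity
`d/dλ B(p_λ)|_{λ=1} = Ĝ(p̄_{λ=1},D) - Ĝ(p_{λ=1},D)` is assumed, `Ĝ(ρ,D) = E_ρ[-ln p(D|θ)]`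
is the (unnormalized) empirical Gibbs loss, and the minimum is attained at some `θ₀`. -/
theorem cpe_implies_gibbs_above_min
    {Θ : Type*} [MeasurableSpace Θ] (μ : Measure Θ)
    (lik : Θ → ℝ) (hlik : ∀ θ, 0 < lik θ)
    (post pbar : Θ → ℝ)
    (hpost_nonneg : ∀ θ, 0 ≤ post θ) (hpost_one : ∫ θ, post θ ∂μ = 1)
    (hpbar_nonneg : ∀ θ, 0 ≤ pbar θ) (hpbar_one : ∫ θ, pbar θ ∂μ = 1)
    (G : (Θ → ℝ) → ℝ)
    (hG : ∀ ρ, G ρ = ∫ θ, -Real.log (lik θ) * ρ θ ∂μ)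
    (hGint : Integrable (fun θ => -Real.log (lik θ) * post θ) μ)
    (hGint' : Integrable (fun θ => -Real.log (lik θ) * pbar θ) μ)
    (B : ℝ → ℝ)
    (hderiv : deriv B 1 = G pbar - G post)
    (θ₀ : Θ) (hmin : ∀ θ, -Real.log (lik θ₀) ≤ -Real.log (lik θ))
    (hcpe : deriv B 1 < 0) :
    -Real.log (lik θ₀) < G post := by
  have hpbar_int : Integrable pbar μ := by
    by_contra h
    rw [integral_undef h] at hpbar_one
    norm_num at hpbar_one
  have hle : -Real.log (lik θ₀) ≤ G pbar := by
    rw [hG]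
    calc -Real.log (lik θ₀) = ∫ θ, -Real.log (lik θ₀) * pbar θ ∂μ := by
          rw [integral_const_mul, hpbar_one, mul_one]
      _ ≤ ∫ θ, -Real.log (lik θ) * pbar θ ∂μ := by
          apply integral_mono (hpbar_int.const_mul _) hGint'
          intro θ
          exact mul_le_mul_of_nonneg_right (hmin θ) (hpbar_nonneg θ)
  have : G pbar < G post := by linarith [hderiv ▸ hcpe]
  linarith
end

section
/- The derivative of the expected Gibbs loss of the tempered posterior satisfies d/dλ G(p_λ) = -Cov_{p_λ}(n L̂(D,θ), L(θ)), where L̂(D,θ) = -(1/n) ln p(D|θ) is the empirical loss and L(θ) is the expected loss. -/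
open MeasureTheory Real

/-- The derivative of the expected Gibbs loss of the tempered posterior satisfies
`d/dλ G(p_λ) = -Cov_{p_λ}(n L̂(D,θ), L(θ))`, where `L̂(D,θ) = -(1/n) ln p(D|θ)` is the
empirical loss and `L(θ) = E_ν[-ln p(y|x,θ)]` is the expected loss. Regularity
(differentiation under the integral sign) is encoded by the `HasDerivAt` hypotheses. -/
theorem deriv_expected_gibbs_eq_neg_cov
    {Θ Zt : Type*} [MeasurableSpace Θ] [MeasurableSpace Zt]
    (μ : Measure Θ) (ν : Measure Zt) [IsProbabilityMeasure ν]
    (prior lik : Θ → ℝ) (pe : Zt → Θ → ℝ) (n : ℕ) (hn : 0 < n)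
    (hprior : ∀ θ, 0 ≤ prior θ) (hlik : ∀ θ, 0 < lik θ) (hpe : ∀ z θ, 0 < pe z θ)
    (L : Θ → ℝ) (hL : ∀ θ, L θ = ∫ z, -Real.log (pe z θ) ∂ν)
    (Lhat : Θ → ℝ) (hLhat : ∀ θ, Lhat θ = -(1 / (n : ℝ)) * Real.log (lik θ))
    (Z : ℝ → ℝ) (hZ : ∀ lam, Z lam = ∫ θ, lik θ ^ lam * prior θ ∂μ)
    (E : ℝ → (Θ → ℝ) → ℝ)
    (hE : ∀ lam g, E lam g = (∫ θ, g θ * (lik θ ^ lam * prior θ) ∂μ) / Z lam)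
    (Cov : ℝ → (Θ → ℝ) → (Θ → ℝ) → ℝ)
    (hCov : ∀ lam g₁ g₂, Cov lam g₁ g₂ = E lam (fun θ => g₁ θ * g₂ θ) - E lam g₁ * E lam g₂)
    (G : ℝ → ℝ) (hG : ∀ lam, G lam = E lam L)
    (lam₀ : ℝ) (hlam₀ : 0 < lam₀) (hZpos : 0 < Z lam₀)
    (hderivZ : HasDerivAt Z (∫ θ, Real.log (lik θ) * (lik θ ^ lam₀ * prior θ) ∂μ) lam₀)
    (hderivNum : HasDerivAt (fun lam => ∫ θ, L θ * (lik θ ^ lam * prior θ) ∂μ)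
      (∫ θ, Real.log (lik θ) * L θ * (lik θ ^ lam₀ * prior θ) ∂μ) lam₀) :
    HasDerivAt G (-(Cov lam₀ (fun θ => (n : ℝ) * Lhat θ) L)) lam₀ := by
  have hdiv := hderivNum.div hderivZ (ne_of_gt hZpos)
  have hGeq : G = fun lam => (∫ θ, L θ * (lik θ ^ lam * prior θ) ∂μ) / Z lam := by
    funext lam; rw [hG, hE]
  rw [hGeq]
  convert hdiv using 1
  · rfl
  · rfl
  · rfl
  have hn' : (n : ℝ) ≠ 0 := Nat.cast_ne_zero.mpr hn.ne'
  have hnL : ∀ θ, (n : ℝ) * Lhat θ = -Real.log (lik θ) := by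
    intro θ; rw [hLhat]; field_simp
  rw [hCov]
  simp only [hE, hnL]
  have h1 : (∫ θ, (-Real.log (lik θ) * L θ) * (lik θ ^ lam₀ * prior θ) ∂μ)
      = -∫ θ, Real.log (lik θ) * L θ * (lik θ ^ lam₀ * prior θ) ∂μ := by
    rw [← integral_neg]; congr 1; funext θ; ring
  have h2 : (∫ θ, (-Real.log (lik θ)) * (lik θ ^ lam₀ * prior θ) ∂μ)
      = -∫ θ, Real.log (lik θ) * (lik θ ^ lam₀ * prior θ) ∂μ := by
    rw [← integral_neg]; congr 1; funext θ; ring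
  rw [h1, h2]
  field_simp
  ring
end

section
/- Recursive PAC-Bayes bound (high-level form): given the events that (i) E_{π_1}[L(h)] < B_1(π_1) for all π_1 ∈ P_1 and (ii) for each t ∈ {2,...,T}, E_{π_t}[L(h) - γ_t E_{π*_{t-1}}[L(h')]] < E_t(π_t, γ_t) for all π_t ∈ P_t, each holding with probability at least 1 - δ/T, then with probability at least 1-δ, simultaneously for all t and all π_t ∈ P_t, E_{π_t}[L(h)] < B_t(π_t), where B_t(π_t) = E_t(π_t, γ_t) + γ_t B_{t-1}(π*_{t-1}) is defined recursively. -/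
open MeasureTheory

/-- Recursive PAC-Bayes bound (high-level form): given that with probability at most
`δ/T` the base bound `B₁` fails on some `π ∈ Ps 1`, and for each `t ∈ {2,...,T}` with
probability at most `δ/T` the excess-loss bound `E_t` fails on some `π ∈ Ps t`, then with
probability at least `1 - δ`, simultaneously for all `t` and all `π_t ∈ Ps t`,
`E_{π_t}[L(h)] < B_t(π_t)`, where `B_t(π) = E_t(π, γ_t) + γ_t B_{t-1}(π*_{t-1})` is
defined recursively from `B_1 = B₁`. -/
theorem recursive_pac_bayes_bound
    {Ω H : Type*} [MeasurableSpace Ω] [MeasurableSpace H]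
    (P : Measure Ω) [IsProbabilityMeasure P]
    (T : ℕ) (hT : 1 ≤ T)
    (L : H → ℝ) (hL : ∀ h, L h ∈ Set.Icc (0 : ℝ) 1)
    (Ps : ℕ → Set (Measure H))
    (hprob : ∀ t ∈ Finset.Icc 1 T, ∀ ρ ∈ Ps t, IsProbabilityMeasure ρ)
    (πstar : ℕ → Measure H) (hπstar : ∀ t ∈ Finset.Icc 1 T, πstar t ∈ Ps t)
    (γ : ℕ → ℝ) (hγ : ∀ t ∈ Finset.Icc 2 T, γ t ∈ Set.Ioo (0 : ℝ) 1)
    (B1 : Measure H → Ω → ℝ)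
    (Ebd : ℕ → Measure H → Ω → ℝ)
    (B : ℕ → Measure H → Ω → ℝ)
    (hBbase : ∀ π ω, B 1 π ω = B1 π ω)
    (hBrec : ∀ t ∈ Finset.Icc 2 T, ∀ π ω,
      B t π ω = Ebd t π ω + γ t * B (t - 1) (πstar (t - 1)) ω)
    (δ : ℝ) (hδ : δ ∈ Set.Ioo (0 : ℝ) 1)
    (h1 : P {ω | ∃ π ∈ Ps 1, B1 π ω ≤ ∫ h, L h ∂π} ≤ ENNReal.ofReal (δ / T))
    (h2 : ∀ t ∈ Finset.Icc 2 T,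
      P {ω | ∃ π ∈ Ps t,
          Ebd t π ω ≤ (∫ h, L h ∂π) - γ t * ∫ h, L h ∂(πstar (t - 1))}
        ≤ ENNReal.ofReal (δ / T)) :
    P {ω | ∃ t ∈ Finset.Icc 1 T, ∃ π ∈ Ps t, B t π ω ≤ ∫ h, L h ∂π}
      ≤ ENNReal.ofReal δ := by

  classical
  set A : ℕ → Set Ω := fun t =>
    if t = 1 then {ω | ∃ π ∈ Ps 1, B1 π ω ≤ ∫ h, L h ∂π}
    else {ω | ∃ π ∈ Ps t,
        Ebd t π ω ≤ (∫ h, L h ∂π) - γ t * ∫ h, L h ∂(πstar (t - 1))} with hA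
  have key : {ω | ∃ t ∈ Finset.Icc 1 T, ∃ π ∈ Ps t, B t π ω ≤ ∫ h, L h ∂π}
      ⊆ ⋃ t ∈ Finset.Icc 1 T, A t := by
    intro ω hω
    by_contra hcon
    simp only [Set.mem_iUnion, not_exists] at hcon
    have good : ∀ t, t ∈ Finset.Icc 1 T → ∀ π ∈ Ps t, ∫ h, L h ∂π < B t π ω := by
      intro t
      induction t using Nat.strong_induction_on with
      | _ t ih =>
        intro ht π hπ
        have ht' := Finset.mem_Icc.mp ht
        have hωA : ω ∉ A t := hcon t ht
        rcases eq_or_lt_of_le ht'.1 with h1t | h2t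
        · -- t = 1
          subst h1t
          simp only [hA, if_pos rfl, Set.mem_setOf_eq, not_exists, not_and, not_le] at hωA
          rw [hBbase]
          exact hωA π hπ
        · -- t ≥ 2
          have ht2 : t ∈ Finset.Icc 2 T := Finset.mem_Icc.mpr ⟨h2t, ht'.2⟩
          have htne : t ≠ 1 := by omega
          simp only [hA, if_neg htne, Set.mem_setOf_eq, not_exists, not_and, not_le] at hωA
          have hE : (∫ h, L h ∂π) - γ t * ∫ h, L h ∂(πstar (t - 1)) < Ebd t π ω :=
            hωA π hπ
          have htm : t - 1 ∈ Finset.Icc 1 T := Finset.mem_Icc.mpr ⟨by omega, by omega⟩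
          have hprev : ∫ h, L h ∂(πstar (t - 1)) < B (t - 1) (πstar (t - 1)) ω :=
            ih (t - 1) (by omega) htm (πstar (t - 1)) (hπstar (t - 1) htm)
          have hγt := hγ t ht2
          have hmul : γ t * ∫ h, L h ∂(πstar (t - 1))
              ≤ γ t * B (t - 1) (πstar (t - 1)) ω :=
            mul_le_mul_of_nonneg_left hprev.le hγt.1.le
          rw [hBrec t ht2]
          linarith
    obtain ⟨t, ht, π, hπ, hB⟩ := hω
    exact absurd (good t ht π hπ) (not_lt.mpr hB)
  calc P {ω | ∃ t ∈ Finset.Icc 1 T, ∃ π ∈ Ps t, B t π ω ≤ ∫ h, L h ∂π}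
      ≤ P (⋃ t ∈ Finset.Icc 1 T, A t) := measure_mono key
    _ ≤ ∑ t ∈ Finset.Icc 1 T, P (A t) := measure_biUnion_finset_le _ _
    _ ≤ ∑ t ∈ Finset.Icc 1 T, ENNReal.ofReal (δ / T) := by
        refine Finset.sum_le_sum fun t ht => ?_
        have ht' := Finset.mem_Icc.mp ht
        rcases eq_or_lt_of_le ht'.1 with h1t | h2t
        · subst h1t; simpa [hA] using h1
        · have ht2 : t ∈ Finset.Icc 2 T := Finset.mem_Icc.mpr ⟨h2t, ht'.2⟩
          have htne : t ≠ 1 := by omega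
          simpa [hA, if_neg htne] using h2 t ht2
    _ = (T : ENNReal) * ENNReal.ofReal (δ / T) := by
        rw [Finset.sum_const, Nat.card_Icc]
        simp [nsmul_eq_mul]
    _ ≤ ENNReal.ofReal δ := by
        have hT0 : (0:ℝ) < T := by exact_mod_cast hT
        rw [show ((T:ENNReal)) = ENNReal.ofReal (T:ℝ) by simp,
          ← ENNReal.ofReal_mul (by positivity)]
        rw [mul_div_cancel₀ δ (ne_of_gt hT0)]
end
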